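/- Let F be a map from paths in ℝ^d to paths in ℝ^t, and let H : T(ℝ^t) → T(ℝ^d) be a linear map such that ⟨σ(F(X)), x⟩ = ⟨σ(X), H x⟩ for all paths X in ℝ^d and all x ∈ T(ℝ^t). Then H is a shuffle homomorphism: H(x₁ ⧢ x₂) = H(x₁) ⧢ H(x₂) for all x₁, x₂ ∈ T(ℝ^t). -/

import Mathlib

open scoped BigOperators TensorProduct

namespace PathVarieties

/-- Words over an alphabet `α`; the letters `{1,…,d}` of `ℝ^d` correspond to `α = Fin d`. -/
abbrev Word (α : Type*) := List α

/-- The tensor algebra `T(ℝ^d)`, identified with the free real vector space on words. -/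
abbrev TA (α : Type*) := Word α →₀ ℝ

/-- The list of all (riffle) shuffles of two words. -/
def shuffles {α : Type*} : Word α → Word α → List (Word α)
  | [], v => [v]
  | a :: u, [] => [a :: u]
  | a :: u, b :: v =>
      ((shuffles u (b :: v)).map (a :: ·)) ++ ((shuffles (a :: u) v).map (b :: ·))
termination_by u v => u.length + v.length
decreasing_by all_goals (simp only [List.length_cons]; omega)

/-- Shuffle product of two words, as an element of `T(ℝ^d)`. -/
noncomputable def shw {α : Type*} (u v : Word α) : TA α :=
  ((shuffles u v).map fun w => Finsupp.single w (1 : ℝ)).sum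

/-- The shuffle product `⧢` on `T(ℝ^d)`, the bilinear extension of the shuffle of words. -/
noncomputable def sh {α : Type*} (x y : TA α) : TA α :=
  x.sum fun u cu => y.sum fun v cv => (cu * cv) • shw u v

/-- Right halfshuffle `u ≻ v` of words (`v` nonempty): shuffle `u` with `v` minus its
last letter, then append the last letter of `v`.  (This is the unique bilinear operation
with `w ≻ a = wa` and `w ≻ (va) = (w≻v + v≻w)a`.) -/
noncomputable def rshw {α : Type*} (u v : Word α) : TA α :=
  ((shuffles u v.dropLast).map fun w =>
    Finsupp.single (w ++ v.drop (v.length - 1)) (1 : ℝ)).sum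

/-- Right halfshuffle `≻` on `T^{≥1}(ℝ^d)`, extended bilinearly. -/
noncomputable def rsh {α : Type*} (x y : TA α) : TA α :=
  x.sum fun u cu => y.sum fun v cv => (cu * cv) • rshw u v

/-- Left halfshuffle `u ≺ v` of words (`u` nonempty): the first letter of `u` followed by
the shuffle of the rest of `u` with `v`.  (This is the unique bilinear operation with
`a ≺ w = aw` and `(av) ≺ w = a(w≺v + v≺w)`.) -/
noncomputable def lshw {α : Type*} (u v : Word α) : TA α :=
  ((shuffles u.tail v).map fun w => Finsupp.single (u.take 1 ++ w) (1 : ℝ)).sum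

/-- Left halfshuffle `≺` on `T^{≥1}(ℝ^d)`, extended bilinearly. -/
noncomputable def lsh {α : Type*} (x y : TA α) : TA α :=
  x.sum fun u cu => y.sum fun v cv => (cu * cv) • lshw u v

/-- The antipode `𝒜`, with `𝒜(i₁⋯iₙ) = (−1)ⁿ iₙ⋯i₁`. -/
noncomputable def antipode {α : Type*} (x : TA α) : TA α :=
  x.sum fun w c => Finsupp.single w.reverse (((-1 : ℝ) ^ w.length) * c)

/-- Helper for `Λ_B`: value on a reversed word. -/
noncomputable def lamRev {α β : Type*} (B : α → TA β) : Word α → TA β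
  | [] => Finsupp.single [] 1
  | [i] => B i
  | i :: w => rsh (lamRev B w) (B i)

/-- `Λ_B` on a word: `Λ_B e = e`, `Λ_B i = B i`, `Λ_B (w·i) = (Λ_B w) ≻ (Λ_B i)`. -/
noncomputable def lamW {α β : Type*} (B : α → TA β) (w : Word α) : TA β :=
  lamRev B w.reverse

/-- The linear map `Λ_B : T(ℝ^t) → T(ℝ^d)` induced by `B` on letters. -/
noncomputable def Lam {α β : Type*} (B : α → TA β) (x : TA α) : TA β :=
  x.sum fun w c => c • lamW B w

/-- `splitEmb e j n w = Σ_{w = u₁⋯uₙ} e_j(u₁) ⧢ e_{j+1}(u₂) ⧢ ⋯ ⧢ e_{j+n−1}(uₙ)`,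
the sum over all splittings of `w` into `n` consecutive (possibly empty) factors,
each factor relabelled letterwise by `e`. -/
noncomputable def splitEmb {α β : Type*} (e : ℕ → α → β) : ℕ → ℕ → Word α → TA β
  | _, 0, w => if w.isEmpty then Finsupp.single ([] : Word β) (1 : ℝ) else 0
  | j, k + 1, w => ∑ m ∈ Finset.range (w.length + 1),
      sh (Finsupp.single ((w.take m).map (e j)) (1 : ℝ)) (splitEmb e (j + 1) k (w.drop m))

/-- `Σ_{x=uv} f(u)·v`: deconcatenate, evaluate the functional `f` on prefixes. -/
noncomputable def leftAct {α : Type*} (f : Word α → ℝ) (x : TA α) : TA α :=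
  x.sum fun w c => c • ∑ k ∈ Finset.range (w.length + 1),
    f (w.take k) • Finsupp.single (w.drop k) (1 : ℝ)

/-- `Σ_{x=uv} u·f(v)`: deconcatenate, evaluate the functional `f` on suffixes. -/
noncomputable def rightAct {α : Type*} (f : Word α → ℝ) (x : TA α) : TA α :=
  x.sum fun w c => c • ∑ k ∈ Finset.range (w.length + 1),
    f (w.drop k) • Finsupp.single (w.take k) (1 : ℝ)

/-- A raw path: a time horizon `T` together with a map `ℝ → ℝ^α`
(only the restriction to `[0,T]` is relevant). -/
structure RawPath (α : Type*) where
  T : ℝ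
  toFun : ℝ → α → ℝ

/-- A path: positive time horizon, continuous on `[0,T]` and piecewise continuously
differentiable there (witnessed by a partition `0 = τ₀ < τ₁ < ⋯ < τₙ = T`). -/
def IsPath {α : Type*} (X : RawPath α) : Prop :=
  0 < X.T ∧ (∀ i, ContinuousOn (fun t => X.toFun t i) (Set.Icc 0 X.T)) ∧
    ∃ (n : ℕ) (τ : Fin (n + 1) → ℝ), StrictMono τ ∧ τ 0 = 0 ∧ τ (Fin.last n) = X.T ∧
      ∀ (k : Fin n) (i : α), ContDiffOn ℝ 1 (fun t => X.toFun t i)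
        (Set.Icc (τ k.castSucc) (τ k.succ))

/-- Iterated integrals, by recursion on the reversed word:
`sigRev X (i :: w) t = ∫₀ᵗ ⟨σ(X)ₛ, w.reverse⟩ dX⁽ⁱ⁾(s)`. -/
noncomputable def sigRev {α : Type*} (X : ℝ → α → ℝ) : Word α → ℝ → ℝ
  | [], _ => 1
  | i :: w, t => ∫ s in (0 : ℝ)..t, sigRev X w s * deriv (fun u => X u i) s

/-- `⟨σ(X)_t, w⟩`, the iterated-integrals signature of `X` stopped at time `t`. -/
noncomputable def sigUpTo {α : Type*} (X : RawPath α) (t : ℝ) (w : Word α) : ℝ :=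
  sigRev X.toFun w.reverse t

/-- `⟨σ(X), w⟩`, the iterated-integrals signature of the path `X` at a word `w`. -/
noncomputable def sig {α : Type*} (X : RawPath α) (w : Word α) : ℝ :=
  sigUpTo X X.T w

/-- Pairing of a word-indexed functional with an element of `T(ℝ^d)`. -/
noncomputable def pairF {α : Type*} (f : Word α → ℝ) (x : TA α) : ℝ :=
  x.sum fun w c => c * f w

/-- `⟨σ(X), x⟩` for a tensor `x ∈ T(ℝ^d)` (linear in `x`). -/
noncomputable def pair {α : Type*} (X : RawPath α) (x : TA α) : ℝ :=
  Finsupp.linearCombination ℝ (sig X) x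

/-- The path variety `𝒱(W)` of all paths whose signature kills every element of `W`. -/
def V {α : Type*} (W : Set (TA α)) : Set (RawPath α) :=
  {X | IsPath X ∧ ∀ x ∈ W, pair X x = 0}

/-- `ℐ(M)`, the space of tensors killed by the signature of every path in `M`. -/
noncomputable def Idl {α : Type*} (M : Set (RawPath α)) : Submodule ℝ (TA α) :=
  ⨅ X ∈ M, LinearMap.ker (Finsupp.linearCombination ℝ (sig X))

/-- Concatenation `X ⊔ Y` of paths. -/
noncomputable def concat {α : Type*} (X Y : RawPath α) : RawPath α where
  T := X.T + Y.T
  toFun := fun t i =>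
    if t ≤ X.T then X.toFun t i else Y.toFun (t - X.T) i + X.toFun X.T i - Y.toFun 0 i

/-- Time reversal `⟵X`. -/
def timeRev {α : Type*} (X : RawPath α) : RawPath α :=
  ⟨X.T, fun t i => X.toFun (X.T - t) i⟩

/-- `concatIter X n = X^{⊔(n+1)}`. -/
noncomputable def concatIter {α : Type*} (X : RawPath α) : ℕ → RawPath α
  | 0 => X
  | n + 1 => concat (concatIter X n) X

/-- `X^{⊔n}`, the `n`-fold concatenation of `X` with itself (intended for `n ≥ 1`). -/
noncomputable def concatPow {α : Type*} (X : RawPath α) (n : ℕ) : RawPath α :=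
  concatIter X (n - 1)

/-- `concatFold f k = f 0 ⊔ f 1 ⊔ ⋯ ⊔ f k`. -/
noncomputable def concatFold {α : Type*} (f : ℕ → RawPath α) : ℕ → RawPath α
  | 0 => f 0
  | k + 1 => concat (concatFold f k) (f (k + 1))

/-- The deconcatenation coproduct `Δ : T(ℝ^d) → T(ℝ^d) ⊗ T(ℝ^d)`,
`Δw = Σ_{w=uv} u ⊗ v`. -/
noncomputable def deconc {α : Type*} (x : TA α) : TensorProduct ℝ (TA α) (TA α) :=
  x.sum fun w c => c • ∑ k ∈ Finset.range (w.length + 1),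
    (Finsupp.single (w.take k) (1 : ℝ)) ⊗ₜ[ℝ] (Finsupp.single (w.drop k) (1 : ℝ))




section Aux

open MeasureTheory intervalIntegral Set

lemma shuffles_nil_left {α : Type*} (v : Word α) : shuffles [] v = [v] := by
  cases v <;> simp [shuffles]

lemma shuffles_nil_right {α : Type*} (u : Word α) : shuffles u [] = [u] := by
  cases u <;> simp [shuffles]

lemma shuffles_cons_cons {α : Type*} (a b : α) (u v : Word α) :
    shuffles (a :: u) (b :: v)
      = ((shuffles u (b :: v)).map (a :: ·)) ++ ((shuffles (a :: u) v).map (b :: ·)) := by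
  rw [shuffles]

lemma perm_swap_middle {γ : Type*} (A B C D : List γ) :
    ((A ++ B) ++ (C ++ D)).Perm ((A ++ C) ++ (B ++ D)) := by
  simp only [List.append_assoc]
  refine List.Perm.append_left A ?_
  have h : ((B ++ C) ++ D).Perm ((C ++ B) ++ D) := (List.perm_append_comm).append_right D
  simpa [List.append_assoc] using h

lemma shuffles_singleton_snoc {α : Type*} (a b : α) :
    ∀ y : Word α, (shuffles [a] (y ++ [b])).Perm
      (((y ++ [b]) ++ [a]) :: (shuffles [a] y).map (· ++ [b]))
  | [] => by
    simp only [List.nil_append, shuffles_cons_cons, shuffles_nil_left, shuffles_nil_right]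
    simpa using List.Perm.swap _ _ _
  | e :: y' => by
    have IH := shuffles_singleton_snoc a b y'
    rw [show (e :: y') ++ [b] = e :: (y' ++ [b]) from rfl, shuffles_cons_cons,
      shuffles_nil_left]
    refine ((List.Perm.append_left _ (IH.map (e :: ·)))).trans ?_
    rw [shuffles_cons_cons, shuffles_nil_left]
    simp only [List.map_map, List.map_cons, List.map_nil, List.map_append,
      Function.comp_def, List.cons_append, List.nil_append, List.append_assoc]
    exact List.Perm.swap _ _ _

lemma shuffles_snoc_singleton {α : Type*} (a b : α) :
    ∀ x : Word α, (shuffles (x ++ [a]) [b]).Perm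
      ((shuffles x [b]).map (· ++ [a]) ++ [(x ++ [a]) ++ [b]])
  | [] => by
    simp only [List.nil_append, shuffles_cons_cons, shuffles_nil_left, shuffles_nil_right]
    simpa using List.Perm.swap _ _ _
  | c :: x' => by
    have IH := shuffles_snoc_singleton a b x'
    rw [show (c :: x') ++ [a] = c :: (x' ++ [a]) from rfl, shuffles_cons_cons,
      shuffles_nil_right]
    refine ((IH.map (c :: ·)).append_right _).trans ?_
    rw [shuffles_cons_cons, shuffles_nil_right]
    simp only [List.map_map, List.map_cons, List.map_nil, List.map_append,
      Function.comp_def, List.cons_append, List.nil_append, List.append_assoc]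
    exact List.Perm.append_left _ (List.Perm.swap _ _ _)

lemma shuffles_snoc_perm {α : Type*} :
    ∀ (N : ℕ) (x y : Word α), x.length + y.length ≤ N → ∀ (a b : α),
    (shuffles (x ++ [a]) (y ++ [b])).Perm
      (((shuffles x (y ++ [b])).map (· ++ [a])) ++ ((shuffles (x ++ [a]) y).map (· ++ [b]))) := by
  intro N
  induction N with
  | zero =>
    intro x y hxy a b
    have hx : x = [] := by cases x <;> simp_all
    have hy : y = [] := by cases y <;> simp_all
    subst hx; subst hy
    simpa [shuffles_nil_left, shuffles_nil_right] using shuffles_singleton_snoc a b []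
  | succ N ih =>
    intro x y hxy a b
    match x, y with
    | [], y =>
      simpa [shuffles_nil_left, shuffles_nil_right] using shuffles_singleton_snoc a b y
    | c :: x', [] =>
      simpa [shuffles_nil_left, shuffles_nil_right] using shuffles_snoc_singleton a b (c :: x')
    | c :: x', e :: y' =>
      have h1 := ih x' (e :: y') (by simp at hxy ⊢; omega) a b
      have h2 := ih (c :: x') y' (by simp at hxy ⊢; omega) a b
      rw [show (c :: x') ++ [a] = c :: (x' ++ [a]) from rfl,
        show (e :: y') ++ [b] = e :: (y' ++ [b]) from rfl, shuffles_cons_cons]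
      have h1' := h1.map (c :: ·)
      have h2' := h2.map (e :: ·)
      simp only [List.cons_append] at h1' h2'
      refine (h1'.append h2').trans ?_
      simp only [List.map_append, List.map_map, Function.comp_def]
      refine (perm_swap_middle _ _ _ _).trans ?_
      conv_rhs => rw [shuffles_cons_cons, shuffles_cons_cons]
      simp only [List.map_append, List.map_map, Function.comp_def, List.cons_append]
      exact List.Perm.refl _

/-- reversal sends shuffles to shuffles of reversals, up to permutation. -/
lemma shuffles_reverse_perm {α : Type*} :
    ∀ (N : ℕ) (u v : Word α), u.length + v.length ≤ N →
    ((shuffles u v).map List.reverse).Perm (shuffles u.reverse v.reverse) := by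
  intro N
  induction N with
  | zero =>
    intro u v huv
    have hu : u = [] := by cases u <;> simp_all
    have hv : v = [] := by cases v <;> simp_all
    subst hu; subst hv
    simp [shuffles_nil_left]
  | succ N ih =>
    intro u v huv
    match u, v with
    | [], v => simp [shuffles_nil_left]
    | a :: u', [] => simp [shuffles_nil_left, shuffles_nil_right]
    | a :: u', b :: v' =>
      rw [shuffles_cons_cons]
      have h1 := ih u' (b :: v') (by simp at huv ⊢; omega)
      have h2 := ih (a :: u') v' (by simp at huv ⊢; omega)
      simp only [List.map_append, List.map_map, Function.comp_def, List.reverse_cons]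
      have h1' : (List.map (fun x => x.reverse ++ [a]) (shuffles u' (b :: v'))).Perm
          ((shuffles u'.reverse (b :: v').reverse).map (· ++ [a])) := by
        simpa [Function.comp_def, List.reverse_cons] using h1.map (· ++ [a])
      have h2' : (List.map (fun x => x.reverse ++ [b]) (shuffles (a :: u') v')).Perm
          ((shuffles (a :: u').reverse v'.reverse).map (· ++ [b])) := by
        simpa [Function.comp_def, List.reverse_cons] using h2.map (· ++ [b])
      refine (h1'.append h2').trans ?_
      simp only [List.reverse_cons]
      exact (shuffles_snoc_perm (u'.reverse.length + (v'.reverse ++ [b]).length)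
        u'.reverse v'.reverse (by simp) a b).symm


/-- Product of primitives as integral (integration by parts for primitives). -/
lemma primitive_mul_primitive {f g : ℝ → ℝ} {t : ℝ} (ht : 0 ≤ t)
    (hf : IntervalIntegrable f volume 0 t) (hg : IntervalIntegrable g volume 0 t) :
    (∫ s in (0:ℝ)..t, f s) * (∫ s in (0:ℝ)..t, g s)
      = ∫ s in (0:ℝ)..t,
          ((∫ r in (0:ℝ)..s, f r) * g s + (∫ r in (0:ℝ)..s, g r) * f s) := by
  set μ : Measure ℝ := volume.restrict (Ioc 0 t) with hμ
  have hμf : Integrable f μ := by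
    rw [intervalIntegrable_iff, uIoc_of_le ht] at hf; exact hf
  have hμg : Integrable g μ := by
    rw [intervalIntegrable_iff, uIoc_of_le ht] at hg; exact hg
  -- primitives
  set F : ℝ → ℝ := fun s => ∫ r in (0:ℝ)..s, f r with hF
  set G : ℝ → ℝ := fun s => ∫ r in (0:ℝ)..s, g r with hG
  have hFval : ∀ s ∈ Ioc 0 t, F s = ∫ y, f y ∂(volume.restrict (Ioc 0 s)) := by
    intro s hs
    show (∫ r in (0:ℝ)..s, f r) = _
    rw [intervalIntegral.integral_of_le hs.1.le]
  have hGval : ∀ s ∈ Ioc 0 t, G s = ∫ y, g y ∂(volume.restrict (Ioc 0 s)) := by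
    intro s hs
    show (∫ r in (0:ℝ)..s, g r) = _
    rw [intervalIntegral.integral_of_le hs.1.le]
  -- the product function on the square
  set S : Set (ℝ × ℝ) := {p : ℝ × ℝ | p.1 ≤ p.2} with hS
  have hSm : MeasurableSet S := measurableSet_le measurable_fst measurable_snd
  have hprod : Integrable (fun p : ℝ × ℝ => f p.1 * g p.2) (μ.prod μ) :=
    hμf.mul_prod hμg
  have hint1 : Integrable (S.indicator (fun p : ℝ × ℝ => f p.1 * g p.2)) (μ.prod μ) :=
    hprod.indicator hSm
  have hint2 : Integrable (Sᶜ.indicator (fun p : ℝ × ℝ => f p.1 * g p.2)) (μ.prod μ) :=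
    hprod.indicator hSm.compl
  -- LHS as double integral
  have hLHS : F t * G t = (∫ p, S.indicator (fun p : ℝ × ℝ => f p.1 * g p.2) p ∂(μ.prod μ))
      + (∫ p, Sᶜ.indicator (fun p : ℝ × ℝ => f p.1 * g p.2) p ∂(μ.prod μ)) := by
    rw [← integral_add hint1 hint2]
    have : (fun p : ℝ × ℝ => S.indicator (fun p : ℝ × ℝ => f p.1 * g p.2) p
        + Sᶜ.indicator (fun p : ℝ × ℝ => f p.1 * g p.2) p)
        = fun p : ℝ × ℝ => f p.1 * g p.2 := by
      have := Set.indicator_self_add_compl S (fun p : ℝ × ℝ => f p.1 * g p.2)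
      exact this
    rw [this, MeasureTheory.integral_prod_mul]
    rcases eq_or_lt_of_le ht with h0 | h0
    · simp [hμ, hF, hG, ← h0]
    · rw [hFval t ⟨h0, le_refl t⟩, hGval t ⟨h0, le_refl t⟩]
  -- Term 2 : over {y < x}, inner integral in y gives G x
  have hTerm2 : (∫ p, Sᶜ.indicator (fun p : ℝ × ℝ => f p.1 * g p.2) p ∂(μ.prod μ))
      = ∫ x, G x * f x ∂μ := by
    rw [MeasureTheory.integral_prod _ hint2]
    refine integral_congr_ae (ae_restrict_iff' measurableSet_Ioc |>.mpr
      (Filter.Eventually.of_forall ?_))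
    intro x hx
    show (∫ y, Sᶜ.indicator (fun p : ℝ × ℝ => f p.1 * g p.2) (x, y) ∂μ) = G x * f x
    have : (fun y => Sᶜ.indicator (fun p : ℝ × ℝ => f p.1 * g p.2) (x, y))
        = (Iio x).indicator (fun y => f x * g y) := by
      funext y
      simp only [Set.indicator_apply, hS, Set.mem_compl_iff, Set.mem_setOf_eq, Set.mem_Iio,
        not_le]
    rw [this, MeasureTheory.integral_indicator measurableSet_Iio, hμ,
      Measure.restrict_restrict measurableSet_Iio]
    have hset : Iio x ∩ Ioc 0 t = Ioo 0 x := by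
      ext y
      simp only [Set.mem_inter_iff, Set.mem_Iio, Set.mem_Ioc, Set.mem_Ioo]
      constructor
      · rintro ⟨h1, h2, h3⟩; exact ⟨h2, h1⟩
      · rintro ⟨h1, h2⟩; exact ⟨h2, h1, le_trans h2.le hx.2⟩
    rw [hset, MeasureTheory.integral_const_mul, ← MeasureTheory.integral_Ioc_eq_integral_Ioo,
      ← hGval x hx]
    ring
  -- Term 1 : over {x ≤ y}, swap, inner integral in x gives F y
  have hTerm1 : (∫ p, S.indicator (fun p : ℝ × ℝ => f p.1 * g p.2) p ∂(μ.prod μ))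
      = ∫ y, F y * g y ∂μ := by
    rw [MeasureTheory.integral_prod _ hint1]
    rw [MeasureTheory.integral_integral_swap (by exact hint1)]
    refine integral_congr_ae (ae_restrict_iff' measurableSet_Ioc |>.mpr
      (Filter.Eventually.of_forall ?_))
    intro y hy
    show (∫ x, S.indicator (fun p : ℝ × ℝ => f p.1 * g p.2) (x, y) ∂μ) = F y * g y
    have : (fun x => S.indicator (fun p : ℝ × ℝ => f p.1 * g p.2) (x, y))
        = (Iic y).indicator (fun x => f x * g y) := by
      funext x
      simp only [Set.indicator_apply, hS, Set.mem_setOf_eq, Set.mem_Iic]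
    rw [this, MeasureTheory.integral_indicator measurableSet_Iic, hμ,
      Measure.restrict_restrict measurableSet_Iic]
    have hset : Iic y ∩ Ioc 0 t = Ioc 0 y := by
      ext x
      simp only [Set.mem_inter_iff, Set.mem_Iic, Set.mem_Ioc]
      constructor
      · rintro ⟨h1, h2, h3⟩; exact ⟨h2, h1⟩
      · rintro ⟨h1, h2⟩; exact ⟨h2, h1, le_trans h2 hy.2⟩
    rw [hset]
    have : ∫ x, f x * g y ∂(volume.restrict (Ioc 0 y)) = F y * g y := by
      rw [MeasureTheory.integral_mul_const, ← hFval y hy]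
    exact this
  -- integrability of F*g and G*f on [0,t]
  have hFc : ContinuousOn F (uIcc 0 t) := by
    apply intervalIntegral.continuousOn_primitive_interval
    rw [uIcc_of_le ht, integrableOn_Icc_iff_integrableOn_Ioc]
    rw [intervalIntegrable_iff, uIoc_of_le ht] at hf; exact hf
  have hGc : ContinuousOn G (uIcc 0 t) := by
    apply intervalIntegral.continuousOn_primitive_interval
    rw [uIcc_of_le ht, integrableOn_Icc_iff_integrableOn_Ioc]
    rw [intervalIntegrable_iff, uIoc_of_le ht] at hg; exact hg
  have hFg : IntervalIntegrable (fun s => F s * g s) volume 0 t :=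
    hg.continuousOn_mul hFc
  have hGf : IntervalIntegrable (fun s => G s * f s) volume 0 t :=
    hf.continuousOn_mul hGc
  -- assemble
  have : F t * G t = (∫ y, F y * g y ∂μ) + (∫ x, G x * f x ∂μ) := by
    rw [hLHS, hTerm1, hTerm2]
  rw [hμ] at this
  calc (∫ s in (0:ℝ)..t, f s) * (∫ s in (0:ℝ)..t, g s) = F t * G t := rfl
    _ = (∫ y, F y * g y ∂(volume.restrict (Ioc 0 t)))
        + (∫ x, G x * f x ∂(volume.restrict (Ioc 0 t))) := this
    _ = (∫ s in (0:ℝ)..t, F s * g s) + (∫ s in (0:ℝ)..t, G s * f s) := by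
        rw [intervalIntegral.integral_of_le ht, intervalIntegral.integral_of_le ht]
    _ = ∫ s in (0:ℝ)..t, (F s * g s + G s * f s) := (integral_add hFg hGf).symm


end Aux


section Analysis

open MeasureTheory intervalIntegral Set

variable {α : Type*}

/-- The derivative of each coordinate of a path is interval integrable on `[0,T]`. -/
lemma deriv_intervalIntegrable (X : RawPath α) (hX : IsPath X) (i : α) {p q : ℝ}
    (hp : p ∈ Icc (0:ℝ) X.T) (hq : q ∈ Icc (0:ℝ) X.T) :
    IntervalIntegrable (fun s => deriv (fun u => X.toFun u i) s) volume p q := by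
  obtain ⟨hT, hcont, n, τ, hmono, h0, hlast, hCD⟩ := hX
  set D : ℝ → ℝ := fun s => deriv (fun u => X.toFun u i) s with hD
  have piece : ∀ k : Fin n, IntervalIntegrable D volume (τ k.castSucc) (τ k.succ) := by
    intro k
    have hab : τ k.castSucc < τ k.succ := hmono Fin.castSucc_lt_succ
    set g : ℝ → ℝ := derivWithin (fun t => X.toFun t i) (Icc (τ k.castSucc) (τ k.succ)) with hg
    have hgc : ContinuousOn g (Icc (τ k.castSucc) (τ k.succ)) :=
      (hCD k i).continuousOn_derivWithin (uniqueDiffOn_Icc hab) le_rfl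
    have hgi : IntegrableOn g (Icc (τ k.castSucc) (τ k.succ)) volume :=
      hgc.integrableOn_Icc
    have heq : EqOn D g (Ioo (τ k.castSucc) (τ k.succ)) := by
      intro x hx
      have : Icc (τ k.castSucc) (τ k.succ) ∈ nhds x := Icc_mem_nhds hx.1 hx.2
      exact (derivWithin_of_mem_nhds this).symm
    have hDi : IntegrableOn D (Ioo (τ k.castSucc) (τ k.succ)) volume :=
      (hgi.mono_set Ioo_subset_Icc_self).congr_fun heq.symm measurableSet_Ioo
    rw [intervalIntegrable_iff, uIoc_of_le hab.le, integrableOn_Ioc_iff_integrableOn_Ioo]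
    exact hDi
  have chain : ∀ m : ℕ, (hm : m ≤ n) →
      IntervalIntegrable D volume (τ 0) (τ ⟨m, Nat.lt_succ_of_le hm⟩) := by
    intro m
    induction m with
    | zero => intro _; exact IntervalIntegrable.refl
    | succ m ihm =>
      intro hm
      have h1 := ihm (Nat.le_of_succ_le hm)
      have h2 := piece ⟨m, hm⟩
      have e1 : (⟨m, hm⟩ : Fin n).castSucc = ⟨m, Nat.lt_succ_of_le (Nat.le_of_succ_le hm)⟩ := rfl
      have e2 : (⟨m, hm⟩ : Fin n).succ = ⟨m + 1, Nat.lt_succ_of_le hm⟩ := rfl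
      rw [e1, e2] at h2
      exact h1.trans h2
  have hfull : IntervalIntegrable D volume 0 X.T := by
    have := chain n le_rfl
    have hl : (⟨n, Nat.lt_succ_of_le le_rfl⟩ : Fin (n+1)) = Fin.last n := rfl
    rw [hl, hlast, h0] at this
    exact this
  exact hfull.mono_set
    (uIcc_subset_uIcc (by rw [uIcc_of_le hT.le]; exact hp) (by rw [uIcc_of_le hT.le]; exact hq))

/-- Iterated integrals are continuous on `[0,T]`. -/
lemma sigRev_continuousOn (X : RawPath α) (hX : IsPath X) :
    ∀ u : Word α, ContinuousOn (sigRev X.toFun u) (Icc (0:ℝ) X.T)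
  | [] => by simp only [sigRev]; exact continuousOn_const
  | i :: w => by
    have hT : (0:ℝ) ≤ X.T := hX.1.le
    have hw := sigRev_continuousOn X hX w
    have hint : IntervalIntegrable (fun s => sigRev X.toFun w s *
        deriv (fun u => X.toFun u i) s) volume 0 X.T :=
      (deriv_intervalIntegrable X hX i (left_mem_Icc.2 hT) (right_mem_Icc.2 hT)).continuousOn_mul
        (by rw [uIcc_of_le hT]; exact hw)
    have : ContinuousOn (fun t => ∫ s in (0:ℝ)..t, sigRev X.toFun w s *
        deriv (fun u => X.toFun u i) s) (uIcc (0:ℝ) X.T) := by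
      apply intervalIntegral.continuousOn_primitive_interval
      rw [uIcc_of_le hT, integrableOn_Icc_iff_integrableOn_Ioc]
      rw [intervalIntegrable_iff, uIoc_of_le hT] at hint
      exact hint
    rw [uIcc_of_le hT] at this
    exact this.congr (fun t ht => by simp only [sigRev])

lemma sigRev_mul_deriv_intervalIntegrable (X : RawPath α) (hX : IsPath X) (u : Word α) (i : α)
    {p q : ℝ} (hp : p ∈ Icc (0:ℝ) X.T) (hq : q ∈ Icc (0:ℝ) X.T) :
    IntervalIntegrable (fun s => sigRev X.toFun u s * deriv (fun t => X.toFun t i) s)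
      volume p q := by
  have hT : (0:ℝ) ≤ X.T := hX.1.le
  refine (deriv_intervalIntegrable X hX i hp hq).continuousOn_mul ?_
  have h1 : p ∈ uIcc (0:ℝ) X.T := by rw [uIcc_of_le hT]; exact hp
  have h2 : q ∈ uIcc (0:ℝ) X.T := by rw [uIcc_of_le hT]; exact hq
  have hsub := uIcc_subset_uIcc h1 h2
  rw [uIcc_of_le hT] at hsub
  exact (sigRev_continuousOn X hX u).mono hsub

lemma intervalIntegrable_list_sum {β : Type*} {p q : ℝ} (L : List β) (f : β → ℝ → ℝ)
    (h : ∀ b ∈ L, IntervalIntegrable (f b) volume p q) :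
    IntervalIntegrable (fun s => (L.map (fun b => f b s)).sum) volume p q := by
  induction L with
  | nil => simpa using intervalIntegrable_const
  | cons b L ih =>
    simp only [List.map_cons, List.sum_cons]
    exact (h b (by simp)).add (ih (fun c hc => h c (by simp [hc])))

lemma integral_list_sum {β : Type*} {p q : ℝ} (L : List β) (f : β → ℝ → ℝ)
    (h : ∀ b ∈ L, IntervalIntegrable (f b) volume p q) :
    ∫ s in p..q, (L.map (fun b => f b s)).sum = (L.map (fun b => ∫ s in p..q, f b s)).sum := by
  induction L with
  | nil => simp
  | cons b L ih =>
    simp only [List.map_cons, List.sum_cons]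
    rw [intervalIntegral.integral_add (h b (by simp))
      (intervalIntegrable_list_sum L f (fun c hc => h c (by simp [hc]))),
      ih (fun c hc => h c (by simp [hc]))]

/-- The shuffle identity for iterated integrals (reversed words). -/
lemma sigRev_mul (X : RawPath α) (hX : IsPath X) :
    ∀ (N : ℕ) (u v : Word α), u.length + v.length ≤ N → ∀ t ∈ Icc (0:ℝ) X.T,
    sigRev X.toFun u t * sigRev X.toFun v t
      = ((shuffles u v).map (fun w => sigRev X.toFun w t)).sum := by
  have hT : (0:ℝ) ≤ X.T := hX.1.le
  intro N
  induction N with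
  | zero =>
    intro u v huv t ht
    have hu : u = [] := by cases u <;> simp_all
    have hv : v = [] := by cases v <;> simp_all
    subst hu; subst hv
    simp [shuffles_nil_left, sigRev]
  | succ N ih =>
    intro u v huv t ht
    match u, v with
    | [], v => simp [shuffles_nil_left, sigRev]
    | a :: u', [] => simp [shuffles_nil_right, sigRev]
    | a :: u', b :: v' =>
      have hmem : ∀ s, s ∈ Icc (0:ℝ) t → s ∈ Icc (0:ℝ) X.T := fun s hs =>
        ⟨hs.1, hs.2.trans ht.2⟩
      have h0T : (0:ℝ) ∈ Icc (0:ℝ) X.T := left_mem_Icc.2 hT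
      set Da : ℝ → ℝ := fun s => deriv (fun r => X.toFun r a) s
      set Db : ℝ → ℝ := fun s => deriv (fun r => X.toFun r b) s
      have hfa : IntervalIntegrable (fun s => sigRev X.toFun u' s * Da s) volume 0 t :=
        sigRev_mul_deriv_intervalIntegrable X hX u' a h0T ht
      have hfb : IntervalIntegrable (fun s => sigRev X.toFun v' s * Db s) volume 0 t :=
        sigRev_mul_deriv_intervalIntegrable X hX v' b h0T ht
      have hLHS : sigRev X.toFun (a :: u') t * sigRev X.toFun (b :: v') t
          = ∫ s in (0:ℝ)..t,
              (sigRev X.toFun (a :: u') s * (sigRev X.toFun v' s * Db s)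
               + sigRev X.toFun (b :: v') s * (sigRev X.toFun u' s * Da s)) := by
        have := primitive_mul_primitive ht.1 hfa hfb
        simp only [sigRev]
        exact this
      -- sums
      set S1 : ℝ → ℝ := fun s => ((shuffles u' (b :: v')).map
        (fun w => sigRev X.toFun w s * Da s)).sum with hS1
      set S2 : ℝ → ℝ := fun s => ((shuffles (a :: u') v').map
        (fun w => sigRev X.toFun w s * Db s)).sum with hS2
      have hint1 : ∀ w ∈ shuffles u' (b :: v'),
          IntervalIntegrable (fun s => sigRev X.toFun w s * Da s) volume 0 t := fun w _ =>
        sigRev_mul_deriv_intervalIntegrable X hX w a h0T ht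
      have hint2 : ∀ w ∈ shuffles (a :: u') v',
          IntervalIntegrable (fun s => sigRev X.toFun w s * Db s) volume 0 t := fun w _ =>
        sigRev_mul_deriv_intervalIntegrable X hX w b h0T ht
      have hRHS : ((shuffles (a :: u') (b :: v')).map (fun w => sigRev X.toFun w t)).sum
          = (∫ s in (0:ℝ)..t, S1 s) + (∫ s in (0:ℝ)..t, S2 s) := by
        rw [shuffles_cons_cons, List.map_append, List.sum_append, List.map_map, List.map_map]
        rw [hS1, hS2, integral_list_sum _ _ hint1, integral_list_sum _ _ hint2]
        congr 1
        all_goals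
          apply congrArg List.sum
          apply List.map_congr_left
          intro w _
          simp only [Function.comp_def, sigRev]
      rw [hLHS, hRHS, ← intervalIntegral.integral_add
        (intervalIntegrable_list_sum _ _ hint1) (intervalIntegrable_list_sum _ _ hint2)]
      apply intervalIntegral.integral_congr
      intro s hs
      rw [uIcc_of_le ht.1] at hs
      have hsT := hmem s hs
      have e1 : sigRev X.toFun (a :: u') s * sigRev X.toFun v' s
          = ((shuffles (a :: u') v').map (fun w => sigRev X.toFun w s)).sum :=
        ih (a :: u') v' (by simp at huv ⊢; omega) s hsT
      have e2 : sigRev X.toFun u' s * sigRev X.toFun (b :: v') s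
          = ((shuffles u' (b :: v')).map (fun w => sigRev X.toFun w s)).sum :=
        ih u' (b :: v') (by simp at huv ⊢; omega) s hsT
      have r1 : sigRev X.toFun (a :: u') s * (sigRev X.toFun v' s * Db s)
          = ((shuffles (a :: u') v').map (fun w => sigRev X.toFun w s * Db s)).sum := by
        rw [← mul_assoc, e1, ← List.sum_map_mul_right]
      have r2 : sigRev X.toFun (b :: v') s * (sigRev X.toFun u' s * Da s)
          = ((shuffles u' (b :: v')).map (fun w => sigRev X.toFun w s * Da s)).sum := by
        rw [← mul_assoc, mul_comm (sigRev X.toFun (b :: v') s), e2, ← List.sum_map_mul_right]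
      dsimp only
      rw [r1, r2]
      exact add_comm _ _

/-- The shuffle identity for the full signature. -/
lemma sig_mul (X : RawPath α) (hX : IsPath X) (u v : Word α) :
    sig X u * sig X v = ((shuffles u v).map (sig X)).sum := by
  have hT : (0:ℝ) ≤ X.T := hX.1.le
  have h := sigRev_mul X hX (u.reverse.length + v.reverse.length) u.reverse v.reverse le_rfl
    X.T (right_mem_Icc.2 hT)
  have hperm := shuffles_reverse_perm (u.length + v.length) u v le_rfl
  have hsum : ((shuffles u.reverse v.reverse).map (fun w => sigRev X.toFun w X.T)).sum
      = (((shuffles u v).map List.reverse).map (fun w => sigRev X.toFun w X.T)).sum :=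
    (hperm.map (fun w => sigRev X.toFun w X.T)).sum_eq.symm
  calc sig X u * sig X v
      = sigRev X.toFun u.reverse X.T * sigRev X.toFun v.reverse X.T := rfl
    _ = ((shuffles u.reverse v.reverse).map (fun w => sigRev X.toFun w X.T)).sum := h
    _ = (((shuffles u v).map List.reverse).map (fun w => sigRev X.toFun w X.T)).sum := hsum
    _ = ((shuffles u v).map (sig X)).sum := by
        rw [List.map_map]; rfl

lemma pair_single (X : RawPath α) (w : Word α) (c : ℝ) :
    pair X (Finsupp.single w c) = c * sig X w := by
  simp [pair, Finsupp.linearCombination_single, smul_eq_mul]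

lemma pair_shw (X : RawPath α) (hX : IsPath X) (u v : Word α) :
    pair X (shw u v) = sig X u * sig X v := by
  rw [sig_mul X hX u v, shw, pair]
  rw [map_list_sum (Finsupp.linearCombination ℝ (sig X)), List.map_map]
  congr 1
  apply List.map_congr_left
  intro w _
  simp [Function.comp_def, Finsupp.linearCombination_single]

lemma pair_sh (X : RawPath α) (hX : IsPath X) (x y : TA α) :
    pair X (sh x y) = pair X x * pair X y := by
  rw [sh, pair, map_finsuppSum]
  have hx : pair X x = x.sum fun u cu => cu * sig X u := by
    rw [pair, Finsupp.linearCombination_apply]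
    rfl
  have hy : pair X y = y.sum fun v cv => cv * sig X v := by
    rw [pair, Finsupp.linearCombination_apply]
    rfl
  rw [hx, hy, Finsupp.sum_mul]
  apply Finsupp.sum_congr
  intro u hu
  rw [map_finsuppSum, Finsupp.mul_sum]
  apply Finsupp.sum_congr
  intro v hv
  rw [(Finsupp.linearCombination ℝ (sig X)).map_smul, smul_eq_mul]
  have := pair_shw X hX u v
  rw [pair] at this
  rw [this]
  ring

end Analysis


section PLPath

open MeasureTheory intervalIntegral Set

/-- clamp to `[0,1]`. -/
noncomputable def clamp (x : ℝ) : ℝ := min (max x 0) 1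

lemma clamp_continuous : Continuous clamp :=
  (continuous_id.max continuous_const).min continuous_const

/-- The piecewise-linear path with unit-time segments in directions `ds` and speeds `a`. -/
noncomputable def PLpath {d : ℕ} (ds : List (Fin d)) (d0 : Fin d) (a : ℕ → ℝ) :
    RawPath (Fin d) where
  T := (ds.length : ℝ)
  toFun := fun t i => ∑ j ∈ Finset.range ds.length,
    (if ds.getD j d0 = i then a j * clamp (t - j) else 0)

variable {d : ℕ} (ds : List (Fin d)) (d0 : Fin d) (a : ℕ → ℝ)

lemma PLpath_continuous (i : Fin d) :
    Continuous (fun t => (PLpath ds d0 a).toFun t i) := by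
  show Continuous fun t => ∑ j ∈ Finset.range ds.length,
    (if ds.getD j d0 = i then a j * clamp (t - j) else 0)
  apply continuous_finset_sum
  intro j _
  by_cases hc : ds.getD j d0 = i
  · simp only [hc, if_true]
    exact continuous_const.mul (clamp_continuous.comp (continuous_id.sub continuous_const))
  · simp only [hc, if_false]
    exact continuous_const

lemma clamp_of_ge {x : ℝ} (hx : 1 ≤ x) : clamp x = 1 := by
  unfold clamp
  rw [max_eq_left (le_trans zero_le_one hx), min_eq_right hx]

lemma clamp_of_le {x : ℝ} (hx : x ≤ 0) : clamp x = 0 := by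
  unfold clamp
  rw [max_eq_right hx, min_eq_left zero_le_one]

lemma clamp_of_mem {x : ℝ} (h0 : 0 ≤ x) (h1 : x ≤ 1) : clamp x = x := by
  unfold clamp
  rw [max_eq_left h0, min_eq_left h1]

/-- On the piece `[j, j+1]` the path is affine. -/
lemma PLpath_affine_on {j : ℕ} (hj : j < ds.length) (i : Fin d) {t : ℝ}
    (ht : t ∈ Icc (j : ℝ) ((j : ℝ) + 1)) :
    (PLpath ds d0 a).toFun t i
      = (∑ j' ∈ Finset.range j, (if ds.getD j' d0 = i then a j' else 0))
        + (if ds.getD j d0 = i then a j * (t - j) else 0) := by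
  show (∑ j' ∈ Finset.range ds.length, _) = _
  have hsplit : Finset.range ds.length = Finset.range (j+1) ∪ Finset.Ico (j+1) ds.length := by
    simp only [Finset.range_eq_Ico]
    rw [Finset.Ico_union_Ico_eq_Ico (Nat.zero_le _) hj]
  rw [hsplit, Finset.sum_union (by
    rw [Finset.range_eq_Ico]
    exact Finset.Ico_disjoint_Ico_consecutive 0 (j+1) ds.length)]
  rw [Finset.sum_range_succ]
  have h1 : ∀ j' ∈ Finset.range j,
      (if ds.getD j' d0 = i then a j' * clamp (t - j') else 0)
        = (if ds.getD j' d0 = i then a j' else 0) := by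
    intro j' hj'
    have : (1:ℝ) ≤ t - j' := by
      have : (j':ℕ) + 1 ≤ j := Finset.mem_range.1 hj'
      have hle : ((j':ℕ):ℝ) + 1 ≤ (j:ℝ) := by exact_mod_cast this
      linarith [ht.1]
    rw [clamp_of_ge this]
    split_ifs <;> ring
  have h2 : (if ds.getD j d0 = i then a j * clamp (t - j) else 0)
      = (if ds.getD j d0 = i then a j * (t - j) else 0) := by
    have h0 : (0:ℝ) ≤ t - j := by linarith [ht.1]
    have h1' : t - j ≤ 1 := by linarith [ht.2]
    rw [clamp_of_mem h0 h1']
  have h3 : ∀ j' ∈ Finset.Ico (j+1) ds.length,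
      (if ds.getD j' d0 = i then a j' * clamp (t - j') else 0) = 0 := by
    intro j' hj'
    have : t - j' ≤ 0 := by
      have : j + 1 ≤ j' := (Finset.mem_Ico.1 hj').1
      have hle : (j:ℝ) + 1 ≤ (j':ℕ) := by exact_mod_cast this
      linarith [ht.2]
    rw [clamp_of_le this]
    split_ifs <;> ring
  rw [Finset.sum_congr rfl h1, h2, Finset.sum_eq_zero h3]
  ring

lemma PLpath_isPath (hm : 0 < ds.length) : IsPath (PLpath ds d0 a) := by
  refine ⟨show (0:ℝ) < (ds.length : ℝ) by exact_mod_cast hm,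
    fun i => (PLpath_continuous ds d0 a i).continuousOn, ?_⟩
  refine ⟨ds.length, fun k => ((k : ℕ) : ℝ), ?_, ?_, ?_, ?_⟩
  · intro k l hkl
    dsimp only
    exact_mod_cast hkl
  · simp
  · show ((Fin.last ds.length : ℕ) : ℝ) = (PLpath ds d0 a).T
    simp [Fin.last]
    rfl
  · intro k i
    have hk : (k : ℕ) < ds.length := k.isLt
    dsimp only
    rw [Fin.coe_castSucc, Fin.val_succ]
    push_cast
    have haff : ContDiff ℝ 1 (fun t : ℝ =>
        (∑ j' ∈ Finset.range (k:ℕ), (if ds.getD j' d0 = i then a j' else 0))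
          + (if ds.getD (k:ℕ) d0 = i then a (k:ℕ) * (t - (k:ℕ)) else 0)) := by
      by_cases hc : ds.getD (k:ℕ) d0 = i
      · simp only [hc, if_true]
        exact contDiff_const.add (contDiff_const.mul (contDiff_id.sub contDiff_const))
      · simp only [hc, if_false]
        exact contDiff_const
    refine haff.contDiffOn.congr ?_
    intro t ht
    exact PLpath_affine_on ds d0 a hk i ht

/-- On the interior of the piece `[j, j+1]`, the derivative is the speed of the segment. -/
lemma PLpath_deriv {j : ℕ} (hj : j < ds.length) (i : Fin d) {s : ℝ}
    (hs : s ∈ Ioo (j : ℝ) ((j : ℝ) + 1)) :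
    deriv (fun t => (PLpath ds d0 a).toFun t i) s
      = (if ds.getD j d0 = i then a j else 0) := by
  set C : ℝ := ∑ j' ∈ Finset.range j, (if ds.getD j' d0 = i then a j' else 0) with hC
  have hev : (fun t => (PLpath ds d0 a).toFun t i) =ᶠ[nhds s]
      (fun t => C + (if ds.getD j d0 = i then a j * (t - j) else 0)) := by
    refine Filter.eventuallyEq_of_mem (isOpen_Ioo.mem_nhds hs) ?_
    intro t ht
    exact PLpath_affine_on ds d0 a hj i (Ioo_subset_Icc_self ht)
  rw [hev.deriv_eq]
  by_cases hc : ds.getD j d0 = i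
  · simp only [hc, if_true]
    have : HasDerivAt (fun t : ℝ => C + a j * (t - (j:ℝ))) (a j) s := by
      have h1 : HasDerivAt (fun t : ℝ => t - (j:ℝ)) 1 s := (hasDerivAt_id s).sub_const _
      have h2 := (h1.const_mul (a j)).const_add C
      simpa using h2
    exact this.deriv
  · simp only [hc, if_false]
    simp

end PLPath


section QQsec

open MvPolynomial
open scoped Classical

noncomputable def QQ {d : ℕ} : List (Fin d) → Word (Fin d) → MvPolynomial ℕ ℝ
  | [], u => if u = [] then 1 else 0
  | i :: rs, u => ∑ k ∈ Finset.range (u.length + 1),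
      if u.take k = List.replicate k i
      then MvPolynomial.C ((k.factorial : ℝ)⁻¹) * (MvPolynomial.X rs.length) ^ k
        * QQ rs (u.drop k)
      else 0

def repw {d : ℕ} : List (Fin d) → (ℕ →₀ ℕ) → Word (Fin d)
  | [], _ => []
  | i :: rs, μ => List.replicate (μ rs.length) i ++ repw rs μ

lemma repw_congr {d : ℕ} : ∀ (rs : List (Fin d)) (μ₁ μ₂ : ℕ →₀ ℕ),
    (∀ j < rs.length, μ₁ j = μ₂ j) → repw rs μ₁ = repw rs μ₂
  | [], _, _, _ => rfl
  | i :: rs, μ₁, μ₂, h => by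
    simp only [repw]
    rw [h rs.length (by simp), repw_congr rs μ₁ μ₂ (fun j hj => h j (by simp; omega))]

lemma repw_ones {d : ℕ} : ∀ (rs : List (Fin d)) (μ : ℕ →₀ ℕ),
    (∀ j < rs.length, μ j = 1) → repw rs μ = rs
  | [], _, _ => rfl
  | i :: rs, μ, h => by
    simp only [repw]
    rw [h rs.length (by simp), repw_ones rs μ (fun j hj => h j (by simp; omega))]
    simp

lemma QQ_coeff {d : ℕ} : ∀ (rs : List (Fin d)) (u : Word (Fin d)) (μ : ℕ →₀ ℕ),
    MvPolynomial.coeff μ (QQ rs u)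
      = if u = repw rs μ ∧ (∀ i, rs.length ≤ i → μ i = 0)
        then ∏ j ∈ Finset.range rs.length, ((μ j).factorial : ℝ)⁻¹ else 0
  | [], u, μ => by
    simp only [QQ, repw]
    by_cases hu : u = []
    · subst hu
      rw [if_pos rfl, MvPolynomial.coeff_one]
      by_cases hμ : μ = 0
      · subst hμ
        simp
      · rw [if_neg (fun h => hμ h.symm)]
        refine Eq.symm (if_neg ?_)
        rintro ⟨-, h⟩
        exact hμ (Finsupp.ext (fun i => h i (Nat.zero_le i)))
    · rw [if_neg hu]
      exact (MvPolynomial.coeff_zero μ).trans (Eq.symm (if_neg (by rintro ⟨h, -⟩; exact hu h)))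
  | i :: rs, u, μ => by
    simp only [QQ]
    rw [MvPolynomial.coeff_sum]
    have hterm : ∀ k ∈ Finset.range (u.length + 1),
        MvPolynomial.coeff μ
          (if u.take k = List.replicate k i
           then MvPolynomial.C ((k.factorial : ℝ)⁻¹) * (MvPolynomial.X rs.length) ^ k
             * QQ rs (u.drop k)
           else 0)
        = if k = μ rs.length ∧ u.take k = List.replicate k i
            ∧ u.drop k = repw rs μ ∧ (∀ i', rs.length + 1 ≤ i' → μ i' = 0)
          then ((k.factorial : ℝ)⁻¹) * ∏ j ∈ Finset.range rs.length, ((μ j).factorial : ℝ)⁻¹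
          else 0 := by
      intro k hk
      by_cases hc : u.take k = List.replicate k i
      · rw [if_pos hc]
        have hmono : MvPolynomial.C ((k.factorial : ℝ)⁻¹)
              * (MvPolynomial.X (σ := ℕ) rs.length) ^ k
            = MvPolynomial.monomial (Finsupp.single rs.length k) ((k.factorial : ℝ)⁻¹) := by
          rw [MvPolynomial.C_mul_X_pow_eq_monomial]
        rw [hmono, mul_comm, MvPolynomial.coeff_mul_monomial']
        by_cases hle : Finsupp.single rs.length k ≤ μ
        · rw [if_pos hle]
          have hkle : k ≤ μ rs.length := by
            have := hle rs.length
            simpa using this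
          rw [QQ_coeff rs (u.drop k) (μ - Finsupp.single rs.length k)]
          have hsub : ∀ j, j ≠ rs.length → (μ - Finsupp.single rs.length k) j = μ j := by
            intro j hj
            rw [Finsupp.tsub_apply, Finsupp.single_apply, if_neg (fun h => hj h.symm)]
            simp
          by_cases hkeq : k = μ rs.length
          · have hsubL : (μ - Finsupp.single rs.length k) rs.length = 0 := by
              rw [Finsupp.tsub_apply, Finsupp.single_apply, if_pos rfl]
              omega
            have hrep : repw rs (μ - Finsupp.single rs.length k) = repw rs μ :=
              repw_congr rs _ _ (fun j hj => hsub j (Nat.ne_of_lt hj))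
            have hprod : (∏ j ∈ Finset.range rs.length,
                (((μ - Finsupp.single rs.length k) j).factorial : ℝ)⁻¹)
                = ∏ j ∈ Finset.range rs.length, ((μ j).factorial : ℝ)⁻¹ := by
              apply Finset.prod_congr rfl
              intro j hj
              rw [hsub j (Nat.ne_of_lt (Finset.mem_range.1 hj))]
            rw [hrep, hprod]
            split_ifs with h1 h2 h2
            · ring
            · exfalso
              apply h2
              refine ⟨hkeq, hc, h1.1, ?_⟩
              intro i' hi'
              have := h1.2 i' (by omega)
              rwa [hsub i' (by omega)] at this
            · exfalso
              apply h1
              obtain ⟨-, -, hd, hh⟩ := h2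
              refine ⟨hd, ?_⟩
              intro i' hi'
              rcases Nat.eq_or_lt_of_le hi' with h3 | h3
              · rw [← h3]
                exact hsubL
              · rw [hsub i' (by omega)]
                exact hh i' (by omega)
            · ring
          · have hL : (μ - Finsupp.single rs.length k) rs.length ≠ 0 := by
              rw [Finsupp.tsub_apply, Finsupp.single_apply, if_pos rfl]
              omega
            rw [if_neg (by
              rintro ⟨-, hh⟩
              exact hL (hh rs.length le_rfl)), if_neg (by rintro ⟨h, -⟩; exact hkeq h)]
            ring
        · rw [if_neg hle, if_neg]
          rintro ⟨hkeq, -⟩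
          apply hle
          intro j
          rw [Finsupp.single_apply]
          split_ifs with h
          · subst h
            omega
          · exact Nat.zero_le _
      · rw [if_neg hc, if_neg (by rintro ⟨-, h, -⟩; exact hc h)]
        exact MvPolynomial.coeff_zero μ
    rw [Finset.sum_congr rfl hterm]
    by_cases hmem : μ rs.length ∈ Finset.range (u.length + 1)
    · rw [Finset.sum_eq_single_of_mem (μ rs.length) hmem
        (fun k hk hkne => if_neg (by rintro ⟨h, -⟩; exact hkne h))]
      split_ifs with h1 h2 h2
      · rw [List.length_cons, Finset.prod_range_succ]
        ring
      · exfalso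
        apply h2
        obtain ⟨-, ht, hd, hh⟩ := h1
        constructor
        · simp only [repw]
          conv_lhs => rw [← List.take_append_drop (μ rs.length) u]
          rw [ht, hd]
        · intro i' hi'
          exact hh i' (by simpa using hi')
      · exfalso
        apply h1
        obtain ⟨hu, hhigh⟩ := h2
        simp only [repw] at hu
        have hlen : (List.replicate (μ rs.length) i).length = μ rs.length := by simp
        refine ⟨rfl, ?_, ?_, ?_⟩
        · rw [hu]
          exact List.take_left' hlen
        · rw [hu]
          exact List.drop_left' hlen
        · intro i' hi'
          exact hhigh i' (by simp only [List.length_cons]; omega)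
      · rfl
    · rw [Finset.sum_eq_zero
        (fun k hk => if_neg (by rintro ⟨hkeq, -⟩; exact hmem (hkeq ▸ hk)))]
      rw [if_neg]
      rintro ⟨hu, -⟩
      apply hmem
      rw [Finset.mem_range]
      have : u.length = μ rs.length + (repw rs μ).length := by
        rw [hu]
        simp [repw]
      omega


end QQsec


section Master

open MeasureTheory intervalIntegral Set

variable {d : ℕ} (ds : List (Fin d)) (d0 : Fin d) (a : ℕ → ℝ)

/-- Within the `j`-th piece, iterated integrals of a PL path satisfy an explicit formula. -/
lemma sigRev_PL_piece (hm : 0 < ds.length) :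
    ∀ (u : Word (Fin d)) (j : ℕ), j < ds.length → ∀ (t : ℝ), t ∈ Icc (j:ℝ) ((j:ℝ)+1) →
    sigRev (PLpath ds d0 a).toFun u t
      = ∑ k ∈ Finset.range (u.length + 1),
          (if u.take k = List.replicate k (ds.getD j d0)
           then (a j * (t - (j:ℝ)))^k / (k.factorial : ℝ)
             * sigRev (PLpath ds d0 a).toFun (u.drop k) (j:ℝ)
           else 0)
  | [] => by
    intro j hj t ht
    simp [sigRev]
  | ℓ :: u' => by
    intro j hj t ht
    classical
    set X := PLpath ds d0 a with hXdef
    have hX : IsPath X := PLpath_isPath ds d0 a hm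
    have hTj : ((j:ℝ)) + 1 ≤ X.T := by
      show ((j:ℝ)) + 1 ≤ ((ds.length : ℕ) : ℝ)
      exact_mod_cast hj
    have hj0 : (0:ℝ) ≤ (j:ℝ) := Nat.cast_nonneg j
    have hjt : (j:ℝ) ≤ t := ht.1
    have h0m : (0:ℝ) ∈ Icc (0:ℝ) X.T := left_mem_Icc.2 (le_trans hj0 (le_trans (by linarith) hTj))
    have hjm : (j:ℝ) ∈ Icc (0:ℝ) X.T := ⟨hj0, by linarith⟩
    have htm : t ∈ Icc (0:ℝ) X.T := ⟨le_trans hj0 hjt, le_trans ht.2 hTj⟩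
    have hint1 : IntervalIntegrable
        (fun s => sigRev X.toFun u' s * deriv (fun r => X.toFun r ℓ) s) volume 0 (j:ℝ) :=
      sigRev_mul_deriv_intervalIntegrable X hX u' ℓ h0m hjm
    have hint2 : IntervalIntegrable
        (fun s => sigRev X.toFun u' s * deriv (fun r => X.toFun r ℓ) s) volume (j:ℝ) t :=
      sigRev_mul_deriv_intervalIntegrable X hX u' ℓ hjm htm
    have hsplit : sigRev X.toFun (ℓ :: u') t
        = sigRev X.toFun (ℓ :: u') (j:ℝ)
          + ∫ s in (j:ℝ)..t, sigRev X.toFun u' s * deriv (fun r => X.toFun r ℓ) s := by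
      show (∫ s in (0:ℝ)..t, sigRev X.toFun u' s * deriv (fun r => X.toFun r ℓ) s) = _
      rw [← intervalIntegral.integral_add_adjacent_intervals hint1 hint2]
      rfl
    -- rewrite the integrand on (j, t)
    have hcong : (∫ s in (j:ℝ)..t, sigRev X.toFun u' s * deriv (fun r => X.toFun r ℓ) s)
        = ∫ s in (j:ℝ)..t,
            (∑ k ∈ Finset.range (u'.length + 1),
              (if u'.take k = List.replicate k (ds.getD j d0)
               then (a j * (s - (j:ℝ)))^k / (k.factorial : ℝ)
                 * sigRev X.toFun (u'.drop k) (j:ℝ)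
               else 0))
            * (if ds.getD j d0 = ℓ then a j else 0) := by
      rw [intervalIntegral.integral_of_le hjt, intervalIntegral.integral_of_le hjt]
      apply MeasureTheory.setIntegral_congr_ae measurableSet_Ioc
      have hne : ∀ᵐ (s : ℝ), s ≠ t := by
        rw [MeasureTheory.ae_iff]
        simpa using measure_singleton t
      filter_upwards [hne] with s hsne hsIoc
      have hsoo : s ∈ Ioo (j:ℝ) ((j:ℝ)+1) :=
        ⟨hsIoc.1, lt_of_lt_of_le (lt_of_le_of_ne hsIoc.2 hsne) ht.2⟩
      rw [sigRev_PL_piece hm u' j hj s (Ioo_subset_Icc_self hsoo),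
        PLpath_deriv ds d0 a hj ℓ hsoo]
    rw [hsplit, hcong]
    by_cases hcase : ds.getD j d0 = ℓ
    · rw [if_pos hcase]
      have hval : (∫ s in (j:ℝ)..t,
          (∑ k ∈ Finset.range (u'.length + 1),
            (if u'.take k = List.replicate k (ds.getD j d0)
             then (a j * (s - (j:ℝ)))^k / (k.factorial : ℝ)
               * sigRev X.toFun (u'.drop k) (j:ℝ)
             else 0)) * a j)
          = ∑ k ∈ Finset.range (u'.length + 1),
              (if u'.take k = List.replicate k (ds.getD j d0)
               then (a j * (t - (j:ℝ)))^(k+1) / ((k+1).factorial : ℝ)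
                 * sigRev X.toFun (u'.drop k) (j:ℝ)
               else 0) := by
        have hmove : ∀ s : ℝ, (∑ k ∈ Finset.range (u'.length + 1),
            (if u'.take k = List.replicate k (ds.getD j d0)
             then (a j * (s - (j:ℝ)))^k / (k.factorial : ℝ)
               * sigRev X.toFun (u'.drop k) (j:ℝ)
             else 0)) * a j
            = ∑ k ∈ Finset.range (u'.length + 1),
              (if u'.take k = List.replicate k (ds.getD j d0)
               then (a j)^(k+1) / (k.factorial : ℝ) * sigRev X.toFun (u'.drop k) (j:ℝ)
                 * (s - (j:ℝ))^k
               else 0) := by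
          intro s
          rw [Finset.sum_mul]
          apply Finset.sum_congr rfl
          intro k hk
          split_ifs
          · rw [mul_pow]
            ring
          · ring
        simp_rw [hmove]
        rw [intervalIntegral.integral_finset_sum]
        · apply Finset.sum_congr rfl
          intro k hk
          split_ifs with hcnd
          · rw [intervalIntegral.integral_const_mul]
            have hip : (∫ s in (j:ℝ)..t, (s - (j:ℝ))^k) = (t - (j:ℝ))^(k+1) / ((k:ℝ)+1) := by
              rw [intervalIntegral.integral_comp_sub_right (fun x => x ^ k) (j:ℝ)]
              rw [integral_pow]
              simp [sub_self]
            have hfac : (((k+1).factorial : ℕ) : ℝ) = ((k:ℝ)+1) * (k.factorial : ℝ) := by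
              rw [Nat.factorial_succ]
              push_cast
              ring
            rw [hip, hfac, mul_pow]
            have hk0 : ((k.factorial : ℕ) : ℝ) ≠ 0 := Nat.cast_ne_zero.2 (Nat.factorial_ne_zero k)
            have hk1 : ((k:ℝ)+1) ≠ 0 := by positivity
            field_simp
          · simp
        · intro k hk
          apply Continuous.intervalIntegrable
          split_ifs
          · exact (continuous_const.mul (((continuous_id.sub continuous_const).pow k)))
          · exact continuous_const
      rw [hval]
      -- now compare with the target sum, peeling off `k = 0`
      conv_rhs => rw [show (ℓ :: u').length + 1 = (u'.length + 1) + 1 from rfl,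
        Finset.sum_range_succ']
      have hzero : (if (ℓ :: u').take 0 = List.replicate 0 (ds.getD j d0)
          then (a j * (t - (j:ℝ)))^0 / ((0:ℕ).factorial : ℝ)
            * sigRev X.toFun ((ℓ :: u').drop 0) (j:ℝ)
          else 0) = sigRev X.toFun (ℓ :: u') (j:ℝ) := by
        simp
      conv_rhs => rw [hzero, add_comm]
      congr 1
      apply Finset.sum_congr rfl
      intro k hk
      have hcnd : ((ℓ :: u').take (k+1) = List.replicate (k+1) (ds.getD j d0))
          ↔ (u'.take k = List.replicate k (ds.getD j d0)) := by
        rw [List.take_succ_cons, List.replicate_succ, List.cons_eq_cons]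
        constructor
        · rintro ⟨-, h⟩; exact h
        · intro h; exact ⟨hcase.symm, h⟩
      rw [List.drop_succ_cons]
      by_cases hc2 : u'.take k = List.replicate k (ds.getD j d0)
      · rw [if_pos hc2, if_pos (hcnd.2 hc2)]
      · rw [if_neg hc2, if_neg (fun hcontra => hc2 (hcnd.1 hcontra))]
    · rw [if_neg hcase]
      simp only [mul_zero, intervalIntegral.integral_zero, add_zero]
      rw [Finset.sum_eq_single_of_mem 0 (Finset.mem_range.2 (Nat.succ_pos _))]
      · simp
      · intro k hk hkne
        obtain ⟨k', rfl⟩ := Nat.exists_eq_succ_of_ne_zero hkne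
        rw [if_neg]
        rw [List.take_succ_cons, List.replicate_succ, List.cons_eq_cons]
        rintro ⟨h1, -⟩
        exact hcase h1.symm

/-- The signature of a PL path at integer times is the evaluation of `QQ`. -/
lemma sigRev_PL_int (hm : 0 < ds.length) :
    ∀ (j : ℕ), j ≤ ds.length → ∀ u : Word (Fin d),
      sigRev (PLpath ds d0 a).toFun u ((j : ℕ) : ℝ)
        = MvPolynomial.eval a (QQ (ds.take j).reverse u) := by
  intro j
  induction j with
  | zero =>
    intro _ u
    match u with
    | [] => simp [sigRev, QQ]
    | ℓ :: u' => simp [sigRev, QQ]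
  | succ j ih =>
    intro hj1 u
    have hj : j < ds.length := hj1
    have ht : (((j+1 : ℕ)) : ℝ) ∈ Icc (j:ℝ) ((j:ℝ)+1) := by
      constructor
      · push_cast; linarith
      · push_cast; linarith
    rw [sigRev_PL_piece ds d0 a hm u j hj _ ht]
    have hts : (((j+1 : ℕ)) : ℝ) - (j:ℝ) = 1 := by push_cast; ring
    have h1 : ds[j]? = some ds[j] := List.getElem?_eq_getElem hj
    have htake : ds.take (j+1) = ds.take j ++ [ds.getD j d0] := by
      rw [List.take_succ, h1]
      have : ds.getD j d0 = ds[j] := by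
        rw [List.getD_eq_getElem?_getD, h1]
        rfl
      rw [this]
      rfl
    rw [htake, List.reverse_append]
    simp only [List.reverse_singleton, List.singleton_append]
    rw [show QQ (ds.getD j d0 :: (ds.take j).reverse) u
        = ∑ k ∈ Finset.range (u.length + 1),
          (if u.take k = List.replicate k (ds.getD j d0)
           then MvPolynomial.C ((k.factorial : ℝ)⁻¹)
             * (MvPolynomial.X (ds.take j).reverse.length) ^ k * QQ (ds.take j).reverse (u.drop k)
           else 0) from rfl]
    rw [map_sum]
    apply Finset.sum_congr rfl
    intro k hk
    rw [apply_ite (MvPolynomial.eval a)]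
    have hL : (ds.take j).reverse.length = j := by
      rw [List.length_reverse, List.length_take]
      omega
    split_ifs with hcnd
    · rw [map_mul, map_mul, MvPolynomial.eval_C, map_pow, MvPolynomial.eval_X, hL,
        ← ih (Nat.le_of_succ_le hj1) (u.drop k), hts, mul_one]
      field_simp
    · simp

/-- Signature of a PL path as a polynomial in the segment speeds. -/
lemma sig_PL (hm : 0 < ds.length) (w : Word (Fin d)) :
    sig (PLpath ds d0 a) w = MvPolynomial.eval a (QQ ds.reverse w.reverse) := by
  have h := sigRev_PL_int ds d0 a hm ds.length le_rfl w.reverse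
  rw [List.take_length] at h
  exact h

end Master


section Separation

open MeasureTheory intervalIntegral Set

/-- The constant path. -/
noncomputable def constPath (d : ℕ) : RawPath (Fin d) := ⟨1, fun _ _ => 0⟩

lemma constPath_isPath (d : ℕ) : IsPath (constPath d) := by
  refine ⟨one_pos, fun i => continuousOn_const, 1, fun k => ((k : ℕ) : ℝ), ?_, ?_, ?_, ?_⟩
  · intro k l hkl
    dsimp only
    exact_mod_cast hkl
  · simp
  · simp [Fin.last, constPath]
  · intro k i
    exact contDiffOn_const

lemma sig_constPath {d : ℕ} (w : Word (Fin d)) :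
    sig (constPath d) w = if w = [] then 1 else 0 := by
  by_cases hw : w = []
  · subst hw
    simp [sig, sigUpTo, sigRev]
  · rw [if_neg hw]
    have : w.reverse ≠ [] := fun h => hw (by simpa using congrArg List.reverse h)
    obtain ⟨i, w', hw'⟩ := List.exists_cons_of_ne_nil this
    show sigRev (constPath d).toFun w.reverse 1 = 0
    rw [hw']
    show (∫ s in (0:ℝ)..1, sigRev (constPath d).toFun w' s
      * deriv (fun u => (constPath d).toFun u i) s) = 0
    have : (fun u => (constPath d).toFun u i) = fun _ => (0:ℝ) := rfl
    rw [this]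
    simp

/-- Signatures of paths separate points of the tensor algebra. -/
lemma separating {d : ℕ} (y : TA (Fin d))
    (h : ∀ X : RawPath (Fin d), IsPath X → pair X y = 0) : y = 0 := by
  classical
  ext w₀
  rw [Finsupp.coe_zero, Pi.zero_apply]
  have hpair : ∀ X : RawPath (Fin d), pair X y = y.sum fun w c => c * sig X w := by
    intro X
    rw [pair, Finsupp.linearCombination_apply]
    rfl
  match w₀ with
  | [] =>
    have h0 := h (constPath d) (constPath_isPath d)
    rw [hpair] at h0
    rw [← h0]
    rw [Finsupp.sum_eq_single ([] : Word (Fin d))]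
    · rw [sig_constPath, if_pos rfl, mul_one]
    · intro w hw hne
      rw [sig_constPath, if_neg hne, mul_zero]
    · intro _
      simp
  | i0 :: w' =>
    set ds : List (Fin d) := i0 :: w' with hds
    have hm : 0 < ds.length := by simp [hds]
    set P : MvPolynomial ℕ ℝ := y.sum fun w c => c • QQ ds.reverse w.reverse with hP
    have heval : ∀ v : ℕ → ℝ, MvPolynomial.eval v P = pair (PLpath ds i0 v) y := by
      intro v
      rw [hpair, hP, map_finsuppSum]
      apply Finsupp.sum_congr
      intro w hw
      rw [MvPolynomial.smul_eq_C_mul, map_mul, MvPolynomial.eval_C, sig_PL ds i0 v hm w]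
    have hP0 : P = 0 := by
      apply MvPolynomial.funext
      intro v
      rw [heval v, map_zero, h (PLpath ds i0 v) (PLpath_isPath ds i0 v hm)]
    set μ : ℕ →₀ ℕ := Finsupp.onFinset (Finset.range ds.length)
      (fun i => if i < ds.length then 1 else 0)
      (fun a ha => by
        rw [Finset.mem_range]
        by_contra hcon
        exact ha (if_neg hcon)) with hμ
    have hμapp : ∀ i, μ i = if i < ds.length then 1 else 0 := fun i => rfl
    have hcoeff : MvPolynomial.coeff μ P = y ds := by
      rw [hP, Finsupp.sum, MvPolynomial.coeff_sum]
      have : ∀ w ∈ y.support, MvPolynomial.coeff μ (y w • QQ ds.reverse w.reverse)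
          = y w * (if w = ds then 1 else 0) := by
        intro w hw
        rw [MvPolynomial.coeff_smul, smul_eq_mul, QQ_coeff]
        congr 1
        have hrep : repw ds.reverse μ = ds.reverse := by
          apply repw_ones
          intro j hj
          rw [hμapp, if_pos (by rw [List.length_reverse] at hj; exact hj)]
        rw [hrep]
        by_cases hweq : w = ds
        · subst hweq
          have hhigh : ∀ i, ds.reverse.length ≤ i → μ i = 0 := by
            intro i hi
            rw [List.length_reverse] at hi
            rw [hμapp, if_neg (by omega)]
          rw [if_pos ⟨rfl, hhigh⟩, if_pos rfl]
          apply Finset.prod_eq_one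
          intro j hj
          rw [List.length_reverse] at hj
          rw [hμapp, if_pos (Finset.mem_range.1 hj)]
          simp
        · rw [if_neg hweq, if_neg]
          rintro ⟨hrev, -⟩
          exact hweq (List.reverse_injective hrev)
      rw [Finset.sum_congr rfl this]
      by_cases hds_mem : ds ∈ y.support
      · rw [Finset.sum_eq_single_of_mem ds hds_mem]
        · rw [if_pos rfl, mul_one]
        · intro w hw hne
          rw [if_neg hne, mul_zero]
      · rw [Finset.sum_eq_zero, eq_comm]
        · exact Finsupp.notMem_support_iff.1 hds_mem
        · intro w hw
          rw [if_neg (fun hcon => hds_mem (by rw [← hcon]; exact hw)), mul_zero]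
    rw [← hcoeff, hP0]
    simp

end Separation

/-- If `F` maps paths in `ℝ^d` to paths in `ℝ^t` and `H` is a linear
map with `⟨σ(F(X)), x⟩ = ⟨σ(X), Hx⟩` for all paths `X` and all `x`, then `H` is a
shuffle homomorphism. -/
theorem statement10 {d t : ℕ} (F : RawPath (Fin d) → RawPath (Fin t))
    (hF : ∀ X, IsPath X → IsPath (F X))
    (H : TA (Fin t) →ₗ[ℝ] TA (Fin d))
    (hFH : ∀ X : RawPath (Fin d), IsPath X →
      ∀ x : TA (Fin t), pair (F X) x = pair X (H x)) :
    ∀ x₁ x₂ : TA (Fin t), H (sh x₁ x₂) = sh (H x₁) (H x₂) := by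
  intro x₁ x₂
  have key : ∀ X : RawPath (Fin d), IsPath X →
      pair X (H (sh x₁ x₂) - sh (H x₁) (H x₂)) = 0 := by
    intro X hX
    have hsub : pair X (H (sh x₁ x₂) - sh (H x₁) (H x₂))
        = pair X (H (sh x₁ x₂)) - pair X (sh (H x₁) (H x₂)) :=
      map_sub (Finsupp.linearCombination ℝ (sig X)) _ _
    rw [hsub, ← hFH X hX (sh x₁ x₂), pair_sh (F X) (hF X hX) x₁ x₂, pair_sh X hX (H x₁) (H x₂),
      hFH X hX x₁, hFH X hX x₂, sub_self]
  have hzero := separating _ key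
  exact sub_eq_zero.1 hzero

end PathVarieties
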